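/- arXiv:2107.06607 — 6 statements merged into one kernel-verified Lean document; each statement's English description precedes it below -/
import Mathlib

section
/- Let (X, 𝒜, μ₀) be a probability space, N a natural number, ρ ≥ 0, and Φ : X × ℝ^N → ℝ a jointly measurable function such that (a) 0 ≤ Φ(x, y) ≤ K for all x ∈ X and all y ∈ ℝ^N with ‖y‖ ≤ ρ, for some constant K ≥ 0, and (b) |Φ(x, y₁) − Φ(x, y₂)| ≤ M·‖y₁ − y₂‖ for all x ∈ X and all y₁, y₂ with ‖y₁‖, ‖y₂‖ ≤ ρ, for some constant M ≥ 0. For ‖y‖ ≤ ρ set Z(y) := ∫_X exp(−Φ(x, y)) dμ₀(x) and f_y(x) := exp(−Φ(x, y))/Z(y). Then there exists a constant C ≥ 0 (depending only on ρ, K, M) such that for all y₁, y₂ ∈ ℝ^N with ‖y₁‖ ≤ ρ and ‖y₂‖ ≤ ρ, the squared Hellinger distance satisfies (1/2)·∫_X (√(f_{y₁}(x)) − √(f_{y₂}(x)))² dμ₀(x) ≤ C²·‖y₁ − y₂‖². (Lipschitz–Hellinger well-posedness of the posterior, Theorem C.3.) -/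
open MeasureTheory

lemma exp_neg_sub_le_of_le {a b : ℝ} (ha : 0 ≤ a) (h : a ≤ b) :
    Real.exp (-a) - Real.exp (-b) ≤ b - a := by
  have h1 : Real.exp (-b) = Real.exp (-a) * Real.exp (a - b) := by
    rw [← Real.exp_add]; ring_nf
  have h2 : Real.exp (-a) ≤ 1 := Real.exp_le_one_iff.2 (by linarith)
  have h3 : (a - b) + 1 ≤ Real.exp (a - b) := Real.add_one_le_exp _
  have h4 : 0 < Real.exp (-a) := Real.exp_pos _
  have e1 : Real.exp (-a) * (1 - Real.exp (a - b)) ≤ Real.exp (-a) * (b - a) :=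
    mul_le_mul_of_nonneg_left (by linarith) h4.le
  have e2 : Real.exp (-a) * (b - a) ≤ 1 * (b - a) :=
    mul_le_mul_of_nonneg_right h2 (by linarith)
  have e3 : Real.exp (-a) - Real.exp (-b) = Real.exp (-a) * (1 - Real.exp (a - b)) := by
    rw [h1]; ring
  linarith

lemma exp_neg_sub_abs_le {a b : ℝ} (ha : 0 ≤ a) (hb : 0 ≤ b) :
    |Real.exp (-a) - Real.exp (-b)| ≤ |a - b| := by
  rcases le_total a b with h | h
  · have h1 : Real.exp (-b) ≤ Real.exp (-a) := Real.exp_le_exp.2 (by linarith)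
    rw [abs_of_nonneg (by linarith), abs_of_nonpos (by linarith)]
    linarith [exp_neg_sub_le_of_le ha h]
  · have h1 : Real.exp (-a) ≤ Real.exp (-b) := Real.exp_le_exp.2 (by linarith)
    rw [abs_of_nonpos (by linarith), abs_of_nonneg (by linarith)]
    linarith [exp_neg_sub_le_of_le hb h]

set_option maxHeartbeats 1000000 in
/-- Lipschitz–Hellinger well-posedness of the posterior (Theorem C.3): under
boundedness and Lipschitz continuity (in the data) of the negative
log-likelihood, the squared Hellinger distance between the posteriors for two
data vectors is bounded by a constant times the squared distance of the data. -/
theorem hellinger_well_posedness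
    {X : Type*} [MeasurableSpace X] (μ₀ : Measure X) [IsProbabilityMeasure μ₀]
    (N : ℕ) (ρ : ℝ) (hρ : 0 ≤ ρ)
    (Φ : X → EuclideanSpace ℝ (Fin N) → ℝ)
    (hΦmeas : Measurable fun p : X × EuclideanSpace ℝ (Fin N) => Φ p.1 p.2)
    (K : ℝ) (hK : 0 ≤ K)
    (hbound : ∀ (x : X) (y : EuclideanSpace ℝ (Fin N)), ‖y‖ ≤ ρ →
      0 ≤ Φ x y ∧ Φ x y ≤ K)
    (M : ℝ) (hM : 0 ≤ M)
    (hlip : ∀ (x : X) (y₁ y₂ : EuclideanSpace ℝ (Fin N)), ‖y₁‖ ≤ ρ → ‖y₂‖ ≤ ρ →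
      |Φ x y₁ - Φ x y₂| ≤ M * ‖y₁ - y₂‖) :
    ∃ C : ℝ, 0 ≤ C ∧
      ∀ y₁ y₂ : EuclideanSpace ℝ (Fin N), ‖y₁‖ ≤ ρ → ‖y₂‖ ≤ ρ →
        (1 / 2) * ∫ x,
            (Real.sqrt (Real.exp (-Φ x y₁) / ∫ x', Real.exp (-Φ x' y₁) ∂μ₀) -
              Real.sqrt (Real.exp (-Φ x y₂) / ∫ x', Real.exp (-Φ x' y₂) ∂μ₀)) ^ 2 ∂μ₀
          ≤ C ^ 2 * ‖y₁ - y₂‖ ^ 2 := by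
  set E := Real.exp K with hE
  have hE1 : 1 ≤ E := Real.one_le_exp hK
  have hE0 : 0 < E := Real.exp_pos _
  refine ⟨E ^ 3 * M, by positivity, ?_⟩
  intro y₁ y₂ hy₁ hy₂
  -- measurability and integrability facts
  have hmeas : ∀ y : EuclideanSpace ℝ (Fin N), Measurable fun x => Real.exp (-Φ x y) := by
    intro y
    exact (Real.measurable_exp.comp
      ((hΦmeas.comp (measurable_id.prodMk measurable_const)).neg))
  have hint : ∀ y : EuclideanSpace ℝ (Fin N), ‖y‖ ≤ ρ →
      Integrable (fun x => Real.exp (-Φ x y)) μ₀ := by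
    intro y hy
    refine (integrable_const (1 : ℝ)).mono' (hmeas y).aestronglyMeasurable ?_
    exact ae_of_all _ fun x => by
      rw [Real.norm_eq_abs, abs_of_pos (Real.exp_pos _)]
      exact Real.exp_le_one_iff.2 (by linarith [(hbound x y hy).1])
  have hZlb : ∀ y : EuclideanSpace ℝ (Fin N), ‖y‖ ≤ ρ →
      Real.exp (-K) ≤ ∫ x', Real.exp (-Φ x' y) ∂μ₀ := by
    intro y hy
    have : ∫ _x' : X, Real.exp (-K) ∂μ₀ = Real.exp (-K) := by simp
    rw [← this]
    exact integral_mono (integrable_const _) (hint y hy)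
      fun x => Real.exp_le_exp.2 (by linarith [(hbound x y hy).2])
  have hZub : ∀ y : EuclideanSpace ℝ (Fin N), ‖y‖ ≤ ρ →
      (∫ x', Real.exp (-Φ x' y) ∂μ₀) ≤ 1 := by
    intro y hy
    have : ∫ _x' : X, (1 : ℝ) ∂μ₀ = 1 := by simp
    rw [← this]
    exact integral_mono (hint y hy) (integrable_const _)
      fun x => Real.exp_le_one_iff.2 (by linarith [(hbound x y hy).1])
  set Z₁ := ∫ x', Real.exp (-Φ x' y₁) ∂μ₀ with hZ₁
  set Z₂ := ∫ x', Real.exp (-Φ x' y₂) ∂μ₀ with hZ₂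
  have hZ₁lb : Real.exp (-K) ≤ Z₁ := hZlb y₁ hy₁
  have hZ₂lb : Real.exp (-K) ≤ Z₂ := hZlb y₂ hy₂
  have hZ₁ub : Z₁ ≤ 1 := hZub y₁ hy₁
  have hZ₂ub : Z₂ ≤ 1 := hZub y₂ hy₂
  have hcK : Real.exp (-K) = E⁻¹ := Real.exp_neg K
  have hcK0 : (0:ℝ) < Real.exp (-K) := Real.exp_pos _
  have hZ₁0 : 0 < Z₁ := lt_of_lt_of_le hcK0 hZ₁lb
  have hZ₂0 : 0 < Z₂ := lt_of_lt_of_le hcK0 hZ₂lb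
  set D := M * ‖y₁ - y₂‖ with hD
  have hD0 : 0 ≤ D := mul_nonneg hM (norm_nonneg _)
  -- |Z₁ - Z₂| ≤ D
  have hZdiff : |Z₁ - Z₂| ≤ D := by
    have hsub : Z₁ - Z₂ = ∫ x, (Real.exp (-Φ x y₁) - Real.exp (-Φ x y₂)) ∂μ₀ :=
      (integral_sub (hint y₁ hy₁) (hint y₂ hy₂)).symm
    rw [hsub, ← Real.norm_eq_abs]
    calc ‖∫ x, (Real.exp (-Φ x y₁) - Real.exp (-Φ x y₂)) ∂μ₀‖
        ≤ D * (μ₀ Set.univ).toReal := by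
          refine norm_integral_le_of_norm_le_const (ae_of_all _ fun x => ?_)
          rw [Real.norm_eq_abs]
          exact le_trans (exp_neg_sub_abs_le (hbound x y₁ hy₁).1 (hbound x y₂ hy₂).1)
            (hlip x y₁ y₂ hy₁ hy₂)
      _ = D := by simp
  -- pointwise bound on the integrand
  have hpt : ∀ x : X,
      (Real.sqrt (Real.exp (-Φ x y₁) / Z₁) - Real.sqrt (Real.exp (-Φ x y₂) / Z₂)) ^ 2
        ≤ E ^ 5 * D ^ 2 := by
    intro x
    set u := Real.exp (-Φ x y₁) with hu
    set v := Real.exp (-Φ x y₂) with hv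
    have hu0 : 0 < u := Real.exp_pos _
    have hv0 : 0 < v := Real.exp_pos _
    have hulb : Real.exp (-K) ≤ u := Real.exp_le_exp.2 (by linarith [(hbound x y₁ hy₁).2])
    have hvlb : Real.exp (-K) ≤ v := Real.exp_le_exp.2 (by linarith [(hbound x y₂ hy₂).2])
    have huub : u ≤ 1 := Real.exp_le_one_iff.2 (by linarith [(hbound x y₁ hy₁).1])
    have hvub : v ≤ 1 := Real.exp_le_one_iff.2 (by linarith [(hbound x y₂ hy₂).1])
    have huv : |u - v| ≤ D :=
      le_trans (exp_neg_sub_abs_le (hbound x y₁ hy₁).1 (hbound x y₂ hy₂).1)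
        (hlip x y₁ y₂ hy₁ hy₂)
    set a := u / Z₁ with ha
    set b := v / Z₂ with hb
    have ha0 : 0 < a := div_pos hu0 hZ₁0
    have hb0 : 0 < b := div_pos hv0 hZ₂0
    -- |a - b| ≤ 2 E² D
    have hab : |a - b| ≤ 2 * E ^ 2 * D := by
      have heq : a - b = ((u - v) * Z₂ + v * (Z₂ - Z₁)) / (Z₁ * Z₂) := by
        rw [ha, hb, div_sub_div _ _ hZ₁0.ne' hZ₂0.ne']
        congr 1
        ring
      rw [heq, abs_div, abs_of_pos (mul_pos hZ₁0 hZ₂0)]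
      have hnum : |(u - v) * Z₂ + v * (Z₂ - Z₁)| ≤ 2 * D := by
        calc |(u - v) * Z₂ + v * (Z₂ - Z₁)| ≤ |(u - v) * Z₂| + |v * (Z₂ - Z₁)| := abs_add_le _ _
          _ = |u - v| * Z₂ + v * |Z₂ - Z₁| := by
              rw [abs_mul, abs_mul, abs_of_pos hZ₂0, abs_of_pos hv0]
          _ ≤ D * 1 + 1 * D := by
              have h1 : |Z₂ - Z₁| ≤ D := by rw [abs_sub_comm]; exact hZdiff
              gcongr
          _ = 2 * D := by ring
      have hden : E⁻¹ * E⁻¹ ≤ Z₁ * Z₂ := by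
        rw [← hcK]; exact mul_le_mul hZ₁lb hZ₂lb hcK0.le hZ₁0.le
      calc |(u - v) * Z₂ + v * (Z₂ - Z₁)| / (Z₁ * Z₂)
          ≤ (2 * D) / (E⁻¹ * E⁻¹) := by
            apply div_le_div₀ (by positivity) hnum (by positivity) hden
        _ = 2 * E ^ 2 * D := by field_simp
    -- lower bound on sqrt values
    set c := Real.exp (-(K / 2)) with hc
    have hc0 : 0 < c := Real.exp_pos _
    have hc2 : c ^ 2 = Real.exp (-K) := by
      rw [hc, sq, ← Real.exp_add]; ring_nf
    have halb : c ^ 2 ≤ a := by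
      rw [hc2]
      calc Real.exp (-K) = Real.exp (-K) / 1 := by ring
        _ ≤ u / Z₁ := div_le_div₀ hu0.le hulb hZ₁0 hZ₁ub
    have hblb : c ^ 2 ≤ b := by
      rw [hc2]
      calc Real.exp (-K) = Real.exp (-K) / 1 := by ring
        _ ≤ v / Z₂ := div_le_div₀ hv0.le hvlb hZ₂0 hZ₂ub
    have hsa : c ≤ Real.sqrt a := (Real.le_sqrt hc0.le ha0.le).2 halb
    have hsb : c ≤ Real.sqrt b := (Real.le_sqrt hc0.le hb0.le).2 hblb
    have hsa2 : Real.sqrt a ^ 2 = a := Real.sq_sqrt ha0.le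
    have hsb2 : Real.sqrt b ^ 2 = b := Real.sq_sqrt hb0.le
    set s := Real.sqrt a
    set t := Real.sqrt b
    have key : (s - t) ^ 2 * (s + t) ^ 2 = (a - b) ^ 2 := by
      have : (s - t) ^ 2 * (s + t) ^ 2 = (s ^ 2 - t ^ 2) ^ 2 := by ring
      rw [this, hsa2, hsb2]
    have h2c : (2 * c) ^ 2 ≤ (s + t) ^ 2 := by
      apply pow_le_pow_left₀ (by positivity)
      linarith
    have hab2 : (a - b) ^ 2 ≤ (2 * E ^ 2 * D) ^ 2 := by
      rw [← sq_abs (a - b)]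
      exact pow_le_pow_left₀ (abs_nonneg _) hab 2
    have hmain : (s - t) ^ 2 * (2 * c) ^ 2 ≤ (2 * E ^ 2 * D) ^ 2 := by
      calc (s - t) ^ 2 * (2 * c) ^ 2 ≤ (s - t) ^ 2 * (s + t) ^ 2 := by
            exact mul_le_mul_of_nonneg_left h2c (sq_nonneg _)
        _ = (a - b) ^ 2 := key
        _ ≤ (2 * E ^ 2 * D) ^ 2 := hab2
    have hcE : c ^ 2 = E⁻¹ := by rw [hc2, hcK]
    have hfin : (s - t) ^ 2 * (4 * E⁻¹) ≤ 4 * E ^ 4 * D ^ 2 := by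
      calc (s - t) ^ 2 * (4 * E⁻¹) = (s - t) ^ 2 * (2 * c) ^ 2 := by
            rw [← hcE]; ring
        _ ≤ (2 * E ^ 2 * D) ^ 2 := hmain
        _ = 4 * E ^ 4 * D ^ 2 := by ring
    have h1 : (s - t) ^ 2 = ((s - t) ^ 2 * (4 * E⁻¹)) * (E / 4) := by
      field_simp
    calc (s - t) ^ 2 = ((s - t) ^ 2 * (4 * E⁻¹)) * (E / 4) := h1
      _ ≤ (4 * E ^ 4 * D ^ 2) * (E / 4) :=
          mul_le_mul_of_nonneg_right hfin (by positivity)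
      _ = E ^ 5 * D ^ 2 := by ring
  -- assemble
  have hbndint : (1 / 2 : ℝ) * ∫ x,
      (Real.sqrt (Real.exp (-Φ x y₁) / Z₁) - Real.sqrt (Real.exp (-Φ x y₂) / Z₂)) ^ 2 ∂μ₀
        ≤ (1/2) * (E ^ 5 * D ^ 2) := by
    have h := norm_integral_le_of_norm_le_const (μ := μ₀)
      (f := fun x => (Real.sqrt (Real.exp (-Φ x y₁) / Z₁)
        - Real.sqrt (Real.exp (-Φ x y₂) / Z₂)) ^ 2)
      (C := E ^ 5 * D ^ 2) (ae_of_all _ fun x => by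
        rw [Real.norm_eq_abs, abs_of_nonneg (sq_nonneg _)]; exact hpt x)
    simp only [probReal_univ, mul_one] at h
    have h2 := le_trans (le_abs_self _) ((Real.norm_eq_abs _) ▸ h)
    linarith
  refine le_trans hbndint ?_
  have : ((E ^ 3 * M) ^ 2) * ‖y₁ - y₂‖ ^ 2 = E ^ 6 * D ^ 2 := by rw [hD]; ring
  rw [this]
  have hE5 : E ^ 5 ≤ E ^ 6 := pow_le_pow_right₀ (by linarith) (by norm_num)
  have h1 : E ^ 5 * D ^ 2 ≤ E ^ 6 * D ^ 2 := mul_le_mul_of_nonneg_right hE5 (sq_nonneg D)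
  have h2 : 0 ≤ E ^ 5 * D ^ 2 := by positivity
  linarith
end

section
/- For a center c ∈ ℝ² and a continuous 2π-periodic function ξ : ℝ → ℝ, let D₁(ξ, c) := {x ∈ ℝ² : ‖x − c‖ < exp(ξ(θ(x − c)))}, where θ(v) ∈ (−π, π] denotes the polar angle of v (the argument of v₁ + i v₂, with θ(0) := 0). Suppose ξ is Lipschitz continuous and 2π-periodic, (ξₙ) is a sequence of continuous 2π-periodic functions with sup_{t∈ℝ} |ξₙ(t) − ξ(t)| → 0, and (cₙ) is a sequence in ℝ² with cₙ → c. Then the two-dimensional Lebesgue measure of the symmetric difference D₁(ξₙ, cₙ) Δ D₁(ξ, c) tends to 0 as n → ∞; in particular the indicator fields converge in measure. (Continuity in measure of the star-shaped parameterization, Proposition B.1.) -/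
open MeasureTheory Filter
open scoped Topology symmDiff NNReal ENNReal

/-- The polar angle `θ(v) ∈ (-π, π]` of a vector `v ∈ ℝ²`, i.e. the argument of
`v₁ + i v₂` (with `θ(0) = 0`). -/
noncomputable def polarAngle (v : EuclideanSpace ℝ (Fin 2)) : ℝ :=
  Complex.arg ⟨v 0, v 1⟩

/-- The star-shaped region with center `c` and log-radial boundary function `ξ`:
`D₁(ξ, c) = {x ∈ ℝ² : ‖x - c‖ < exp(ξ(θ(x - c)))}`. -/
noncomputable def starRegion (ξ : ℝ → ℝ) (c : EuclideanSpace ℝ (Fin 2)) :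
    Set (EuclideanSpace ℝ (Fin 2)) :=
  {x | ‖x - c‖ < Real.exp (ξ (polarAngle (x - c)))}

noncomputable def toC (v : EuclideanSpace ℝ (Fin 2)) : ℂ := ⟨v 0, v 1⟩

lemma abs_toC (v : EuclideanSpace ℝ (Fin 2)) : ‖toC v‖ = ‖v‖ := by
  rw [EuclideanSpace.norm_eq, Complex.norm_def, Complex.normSq_mk]
  simp [toC, Fin.sum_univ_two, sq, Real.norm_eq_abs, abs_mul_abs_self]

lemma polarAngle_eq (v : EuclideanSpace ℝ (Fin 2)) : polarAngle v = Complex.arg (toC v) := rfl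

lemma toC_ne_zero {v : EuclideanSpace ℝ (Fin 2)} (hv : v ≠ 0) : toC v ≠ 0 := by
  intro h
  apply hv
  have := abs_toC v
  rw [h, norm_zero] at this
  exact norm_eq_zero.1 this.symm

lemma continuous_toC : Continuous toC := by
  have h0 : Continuous fun v : EuclideanSpace ℝ (Fin 2) => v 0 :=
    (continuous_apply 0).comp (PiLp.continuous_ofLp ..)
  have h1 : Continuous fun v : EuclideanSpace ℝ (Fin 2) => v 1 :=
    (continuous_apply 1).comp (PiLp.continuous_ofLp ..)
  exact (Complex.equivRealProdCLM.symm.continuous.comp (h0.prodMk h1)).congr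
    fun x => rfl

lemma periodic_lift_continuous {ξ : ℝ → ℝ} (hc : Continuous ξ)
    (hp : Function.Periodic ξ (2 * Real.pi)) : Continuous hp.lift :=
  hc.quotient_liftOn' fun a b h' => by
    rw [QuotientAddGroup.leftRel_apply] at h'
    obtain ⟨k, hk⟩ := h'
    exact (hp.zsmul k _).symm.trans (congr_arg ξ (add_eq_of_eq_neg_add hk))

/-- Continuity of `ξ ∘ arg` at nonzero points, for `2π`-periodic continuous `ξ`. -/
lemma continuousAt_comp_arg {ξ : ℝ → ℝ} (hc : Continuous ξ)
    (hp : Function.Periodic ξ (2 * Real.pi)) {z : ℂ} (hz : z ≠ 0) :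
    ContinuousAt (fun w => ξ (Complex.arg w)) z := by
  have h1 : ContinuousAt ((↑) ∘ Complex.arg : ℂ → Real.Angle) z :=
    Complex.continuousAt_arg_coe_angle hz
  have h2 : (fun w => ξ (Complex.arg w)) = hp.lift ∘ ((↑) ∘ Complex.arg : ℂ → Real.Angle) := by
    funext w; rfl
  rw [h2]
  exact ((periodic_lift_continuous hc hp).continuousAt).comp h1

/-- A continuous `2π`-periodic function is bounded. -/
lemma periodic_bounded {ξ : ℝ → ℝ} (hc : Continuous ξ)
    (hp : Function.Periodic ξ (2 * Real.pi)) : ∃ M : ℝ, ∀ t, |ξ t| ≤ M := by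
  obtain ⟨M, hM⟩ :=
    (isCompact_Icc (a := 0) (b := 2 * Real.pi)).exists_bound_of_continuousOn hc.continuousOn
  refine ⟨M, fun t => ?_⟩
  obtain ⟨y, hy, hyeq⟩ := hp.exists_mem_Ico₀ (by positivity) t
  rw [hyeq]; exact hM y ⟨hy.1, hy.2.le⟩

lemma exp_lip {M a b : ℝ} (ha : a ≤ M) (hb : b ≤ M) :
    |Real.exp a - Real.exp b| ≤ Real.exp M * |a - b| := by
  wlog h : b ≤ a generalizing a b
  · rw [abs_sub_comm, abs_sub_comm a b]; exact this hb ha (le_of_not_ge h)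
  rw [abs_of_nonneg (sub_nonneg.2 (Real.exp_le_exp.2 h)), abs_of_nonneg (sub_nonneg.2 h)]
  have h1 : b - a + 1 ≤ Real.exp (b - a) := Real.add_one_le_exp _
  have h2 : Real.exp (b - a) * Real.exp a = Real.exp b := by rw [← Real.exp_add]; ring_nf
  have h3 := Real.exp_pos a
  have h4 : Real.exp a ≤ Real.exp M := Real.exp_le_exp.2 ha
  nlinarith

lemma abs_sin_sub_sin (s t : ℝ) : |Real.sin s - Real.sin t| ≤ |s - t| := by
  rw [Real.sin_sub_sin, abs_mul, abs_mul, abs_two]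
  calc 2 * |Real.sin ((s - t) / 2)| * |Real.cos ((s + t) / 2)|
      ≤ 2 * |(s - t) / 2| * 1 := by
        apply mul_le_mul _ (Real.abs_cos_le_one _) (abs_nonneg _) (by positivity)
        exact mul_le_mul_of_nonneg_left Real.abs_sin_le_abs (by norm_num)
    _ = |s - t| := by rw [abs_div, abs_two]; ring

lemma abs_cos_sub_cos (s t : ℝ) : |Real.cos s - Real.cos t| ≤ |s - t| := by
  rw [Real.cos_sub_cos, abs_mul, abs_mul, abs_neg, abs_two]
  calc 2 * |Real.sin ((s + t) / 2)| * |Real.sin ((s - t) / 2)|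
      ≤ 2 * 1 * |(s - t) / 2| := by
        apply mul_le_mul _ Real.abs_sin_le_abs (abs_nonneg _) (by norm_num)
        exact mul_le_mul_of_nonneg_left (Real.abs_sin_le_one _) (by norm_num)
    _ = |s - t| := by rw [abs_div, abs_two]; ring

noncomputable def curve (ξ : ℝ → ℝ) (c : EuclideanSpace ℝ (Fin 2)) (t : ℝ) :
    EuclideanSpace ℝ (Fin 2) :=
  c + (EuclideanSpace.equiv (Fin 2) ℝ).symm
    ![Real.exp (ξ t) * Real.cos t, Real.exp (ξ t) * Real.sin t]

noncomputable def uC (t : ℝ) : ℂ := ⟨Real.cos t, Real.sin t⟩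

lemma abs_uC (t : ℝ) : ‖uC t‖ = 1 := by
  rw [uC, Complex.norm_def, Complex.normSq_mk]
  rw [← sq, ← sq, add_comm, Real.sin_sq_add_cos_sq, Real.sqrt_one]

lemma abs_uC_sub (s t : ℝ) : ‖uC s - uC t‖ ≤ 2 * |s - t| := by
  refine le_trans (Complex.norm_le_abs_re_add_abs_im _) ?_
  have h1 : (uC s - uC t).re = Real.cos s - Real.cos t := rfl
  have h2 : (uC s - uC t).im = Real.sin s - Real.sin t := rfl
  rw [h1, h2]
  have := abs_cos_sub_cos s t
  have := abs_sin_sub_sin s t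
  linarith

lemma toC_curve_sub (ξ : ℝ → ℝ) (c : EuclideanSpace ℝ (Fin 2)) (s t : ℝ) :
    toC (curve ξ c s - curve ξ c t)
      = (Real.exp (ξ s) : ℂ) * uC s - (Real.exp (ξ t) : ℂ) * uC t := by
  apply Complex.ext
  · show (curve ξ c s - curve ξ c t) 0 = _
    simp [curve, uC, Complex.mul_re, Complex.exp_ofReal_re]
  · show (curve ξ c s - curve ξ c t) 1 = _
    simp [curve, uC, Complex.mul_im, Complex.exp_ofReal_re]

lemma curve_lip {ξ : ℝ → ℝ} {L : ℝ≥0} {M : ℝ} (hξlip : LipschitzWith L ξ)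
    (hM : ∀ t, |ξ t| ≤ M) (c : EuclideanSpace ℝ (Fin 2)) :
    LipschitzWith (Real.exp M * L + 2 * Real.exp M).toNNReal (curve ξ c) := by
  apply LipschitzWith.of_dist_le_mul
  intro s t
  have hd : dist (curve ξ c s) (curve ξ c t) = ‖toC (curve ξ c s - curve ξ c t)‖ := by
    rw [dist_eq_norm, abs_toC]
  rw [hd, toC_curve_sub]
  have hsplit : (Real.exp (ξ s) : ℂ) * uC s - (Real.exp (ξ t) : ℂ) * uC t
      = ((Real.exp (ξ s) - Real.exp (ξ t) : ℝ) : ℂ) * uC s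
        + (Real.exp (ξ t) : ℂ) * (uC s - uC t) := by
    push_cast; ring
  rw [hsplit]
  refine le_trans (norm_add_le _ _) ?_
  rw [norm_mul, norm_mul, Complex.norm_real, Complex.norm_real, Real.norm_eq_abs, Real.norm_eq_abs, abs_uC, mul_one]
  have hf : |Real.exp (ξ s) - Real.exp (ξ t)| ≤ Real.exp M * (L * |s - t|) := by
    refine le_trans (exp_lip (abs_le.1 (hM s)).2 (abs_le.1 (hM t)).2) ?_
    have := hξlip.dist_le_mul s t
    rw [Real.dist_eq, Real.dist_eq] at this
    exact mul_le_mul_of_nonneg_left this (Real.exp_pos M).le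
  have hu : ‖uC s - uC t‖ ≤ 2 * |s - t| := abs_uC_sub s t
  have hexpt : |Real.exp (ξ t)| ≤ Real.exp M := by
    rw [abs_of_pos (Real.exp_pos _)]
    exact Real.exp_le_exp.2 (abs_le.1 (hM t)).2
  have hcoe : ((Real.exp M * L + 2 * Real.exp M).toNNReal : ℝ)
      = Real.exp M * L + 2 * Real.exp M := by
    rw [Real.coe_toNNReal]
    positivity
  rw [hcoe, Real.dist_eq]
  have h2 : |Real.exp (ξ t)| * ‖uC s - uC t‖ ≤ Real.exp M * (2 * |s - t|) := by
    apply mul_le_mul hexpt hu (by positivity) (Real.exp_pos M).le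
  nlinarith [abs_nonneg (s - t)]

lemma boundary_subset_curve {ξ : ℝ → ℝ} (c : EuclideanSpace ℝ (Fin 2)) :
    {x : EuclideanSpace ℝ (Fin 2) | ‖x - c‖ = Real.exp (ξ (polarAngle (x - c)))}
      ⊆ curve ξ c '' Set.Icc (-Real.pi) Real.pi := by
  intro x hx
  simp only [Set.mem_setOf_eq] at hx
  set t := polarAngle (x - c) with ht
  have htmem : t ∈ Set.Icc (-Real.pi) Real.pi :=
    ⟨(Complex.arg_mem_Ioc _).1.le, (Complex.arg_mem_Ioc _).2⟩
  refine ⟨t, htmem, ?_⟩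
  set z := toC (x - c) with hzdef
  have habs : ‖z‖ = Real.exp (ξ t) := by rw [hzdef, abs_toC, hx]
  have hz : z ≠ 0 := by
    intro h; rw [h] at habs; simp at habs; exact absurd habs.symm (Real.exp_pos _).ne'
  have harg : Complex.arg z = t := rfl
  have hre : Real.exp (ξ t) * Real.cos t = z.re := by
    rw [← harg, Complex.cos_arg hz, habs, harg]; field_simp
  have him : Real.exp (ξ t) * Real.sin t = z.im := by
    rw [← harg, Complex.sin_arg, habs, harg]; field_simp
  have hzre : z.re = x 0 - c 0 := by simp [hzdef, toC]
  have hzim : z.im = x 1 - c 1 := by simp [hzdef, toC]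
  ext i
  fin_cases i <;>
    simp [curve, hre, him, hzre, hzim, EuclideanSpace.equiv]

lemma volume_ac_hausdorff :
    (volume : Measure (EuclideanSpace ℝ (Fin 2))) ≪ μH[(2 : ℝ≥0)] := by
  have h : ((2 : ℝ≥0) : ℝ) = ((Module.finrank ℝ (EuclideanSpace ℝ (Fin 2)) : ℝ)) := by
    simp [finrank_euclideanSpace_fin]
  rw [show (μH[(2 : ℝ≥0)] : Measure (EuclideanSpace ℝ (Fin 2)))
      = μH[(Module.finrank ℝ (EuclideanSpace ℝ (Fin 2)) : ℝ)] by rw [← h]]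
  exact Measure.absolutelyContinuous_isAddHaarMeasure _ _

lemma boundary_null {ξ : ℝ → ℝ} {L : ℝ≥0} (hξlip : LipschitzWith L ξ)
    (hp : Function.Periodic ξ (2 * Real.pi)) (c : EuclideanSpace ℝ (Fin 2)) :
    volume {x : EuclideanSpace ℝ (Fin 2) | ‖x - c‖ = Real.exp (ξ (polarAngle (x - c)))} = 0 := by
  obtain ⟨M, hM⟩ := periodic_bounded hξlip.continuous hp
  refine measure_mono_null (boundary_subset_curve c) ?_
  refine measure_zero_of_dimH_lt volume_ac_hausdorff ?_
  calc dimH (curve ξ c '' Set.Icc (-Real.pi) Real.pi)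
      ≤ dimH (Set.Icc (-Real.pi) Real.pi) := (curve_lip hξlip hM c).dimH_image_le _
    _ ≤ dimH (Set.univ : Set ℝ) := dimH_mono (Set.subset_univ _)
    _ = 1 := Real.dimH_univ
    _ < 2 := by norm_num

lemma isOpen_starRegion {ξ : ℝ → ℝ} (hcont : Continuous ξ)
    (hp : Function.Periodic ξ (2 * Real.pi)) (c : EuclideanSpace ℝ (Fin 2)) :
    IsOpen (starRegion ξ c) := by
  obtain ⟨M, hM⟩ := periodic_bounded hcont hp
  rw [isOpen_iff_mem_nhds]
  intro x hx
  by_cases hxc : x = c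
  · subst hxc
    have hsub : Metric.ball x (Real.exp (-M)) ⊆ starRegion ξ x := by
      intro y hy
      rw [Metric.mem_ball, dist_eq_norm] at hy
      exact lt_of_lt_of_le hy (Real.exp_le_exp.2 (abs_le.1 (hM _)).1)
    exact Filter.mem_of_superset (Metric.ball_mem_nhds x (Real.exp_pos _)) hsub
  · have hz : toC (x - c) ≠ 0 := toC_ne_zero (sub_ne_zero.2 hxc)
    have h1 : ContinuousAt (fun y : EuclideanSpace ℝ (Fin 2) => ‖y - c‖) x :=
      ((continuous_id.sub continuous_const).norm).continuousAt
    have h2 : ContinuousAt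
        (fun y : EuclideanSpace ℝ (Fin 2) => Real.exp (ξ (polarAngle (y - c)))) x := by
      apply Real.continuous_exp.continuousAt.comp
      have harg : ContinuousAt (fun w : ℂ => ξ (Complex.arg w)) (toC (x - c)) :=
        continuousAt_comp_arg hcont hp hz
      have h3 : Continuous (fun y : EuclideanSpace ℝ (Fin 2) => toC (y - c)) :=
        continuous_toC.comp (continuous_id.sub continuous_const)
      exact ContinuousAt.comp (f := fun y => toC (y - c)) harg h3.continuousAt
    have := h1.eventually_lt h2 hx
    exact this

/-- Continuity in measure of the star-shaped parameterization (Proposition B.1):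
if `ξₙ → ξ` uniformly (with `ξ` Lipschitz, all functions `2π`-periodic) and
`cₙ → c`, then the Lebesgue measure of the symmetric difference
`D₁(ξₙ, cₙ) ∆ D₁(ξ, c)` tends to `0`. -/
theorem starRegion_continuous_in_measure
    (ξ : ℝ → ℝ) (L : NNReal) (hξlip : LipschitzWith L ξ)
    (hξper : Function.Periodic ξ (2 * Real.pi))
    (ξn : ℕ → ℝ → ℝ) (hcont : ∀ n, Continuous (ξn n))
    (hper : ∀ n, Function.Periodic (ξn n) (2 * Real.pi))
    (hunif : TendstoUniformly ξn ξ atTop)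
    (cn : ℕ → EuclideanSpace ℝ (Fin 2)) (c : EuclideanSpace ℝ (Fin 2))
    (hc : Tendsto cn atTop (𝓝 c)) :
    Tendsto (fun n => volume (starRegion (ξn n) (cn n) ∆ starRegion ξ c))
      atTop (𝓝 0) := by
  obtain ⟨M, hM⟩ := periodic_bounded hξlip.continuous hξper
  have hAopen := isOpen_starRegion hξlip.continuous hξper c
  have hAn : ∀ n, IsOpen (starRegion (ξn n) (cn n)) := fun n =>
    isOpen_starRegion (hcont n) (hper n) _
  set B := Metric.closedBall c (Real.exp (M + 1) + 1) with hB
  have hBm : MeasurableSet B := measurableSet_closedBall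
  have hBfin : volume B ≠ ∞ := measure_closedBall_lt_top.ne
  -- eventual containment in B
  have hsubB : ∀ᶠ n in atTop,
      starRegion (ξn n) (cn n) ∆ starRegion ξ c ⊆ B := by
    filter_upwards [Metric.tendstoUniformly_iff.1 hunif 1 one_pos,
      hc.eventually (Metric.ball_mem_nhds c one_pos)] with n hn hcn
    intro y hy
    have hy' : y ∈ starRegion (ξn n) (cn n) ∪ starRegion ξ c := Set.symmDiff_subset_union hy
    rcases hy' with hyn | hyc
    · have h1 : ‖y - cn n‖ < Real.exp (M + 1) := by
        refine lt_of_lt_of_le hyn (Real.exp_le_exp.2 ?_)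
        have := hn (polarAngle (y - cn n))
        rw [Real.dist_eq] at this
        have h2 := (abs_le.1 (hM (polarAngle (y - cn n)))).2
        have := abs_lt.1 this
        linarith [this.2]
      have hd : dist y c ≤ dist y (cn n) + dist (cn n) c := dist_triangle _ _ _
      have h2 : dist y (cn n) = ‖y - cn n‖ := dist_eq_norm _ _
      rw [Metric.mem_closedBall]
      linarith
    · have h1 : ‖y - c‖ ≤ Real.exp (M + 1) := by
        refine le_trans hyc.le (Real.exp_le_exp.2 ?_)
        linarith [(abs_le.1 (hM (polarAngle (y - c)))).2]
      rw [Metric.mem_closedBall, dist_eq_norm]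
      linarith
  -- a.e. pointwise eventual non-membership
  have hnull : volume ({c} ∪
      {x : EuclideanSpace ℝ (Fin 2) | ‖x - c‖ = Real.exp (ξ (polarAngle (x - c)))}) = 0 :=
    measure_union_null (measure_singleton c) (boundary_null hξlip hξper c)
  have hae : ∀ᵐ x : EuclideanSpace ℝ (Fin 2), ∀ᶠ n in atTop,
      (x ∈ starRegion (ξn n) (cn n) ∆ starRegion ξ c ↔
        x ∈ (∅ : Set (EuclideanSpace ℝ (Fin 2)))) := by
    refine (measure_eq_zero_iff_ae_notMem.1 hnull).mono fun x hx => ?_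
    rw [Set.mem_union] at hx
    push_neg at hx
    obtain ⟨hxc, hxb⟩ := hx
    rw [Set.mem_singleton_iff] at hxc
    rw [Set.mem_setOf_eq] at hxb
    have hvc : Tendsto (fun n => x - cn n) atTop (𝓝 (x - c)) := tendsto_const_nhds.sub hc
    have hr : Tendsto (fun n => ‖x - cn n‖) atTop (𝓝 ‖x - c‖) := hvc.norm
    have hz : toC (x - c) ≠ 0 := toC_ne_zero (sub_ne_zero.2 hxc)
    have h1 : Tendsto (fun n => ξ (polarAngle (x - cn n))) atTop
        (𝓝 (ξ (polarAngle (x - c)))) := by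
      have htoC : Tendsto (fun n => toC (x - cn n)) atTop (𝓝 (toC (x - c))) :=
        (continuous_toC.tendsto _).comp hvc
      exact ((continuousAt_comp_arg hξlip.continuous hξper hz).tendsto).comp htoC
    have h2 : Tendsto (fun n => ξn n (polarAngle (x - cn n)) - ξ (polarAngle (x - cn n)))
        atTop (𝓝 0) := by
      rw [Metric.tendsto_nhds]
      intro ε hε
      filter_upwards [Metric.tendstoUniformly_iff.1 hunif ε hε] with n hn
      have := hn (polarAngle (x - cn n))
      rw [Real.dist_eq] at this
      rw [Real.dist_eq, sub_zero, abs_sub_comm]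
      exact this
    have h3 : Tendsto (fun n => ξn n (polarAngle (x - cn n))) atTop
        (𝓝 (ξ (polarAngle (x - c)))) := by
      have := h2.add h1
      simpa using this
    have he : Tendsto (fun n => Real.exp (ξn n (polarAngle (x - cn n)))) atTop
        (𝓝 (Real.exp (ξ (polarAngle (x - c))))) :=
      (Real.continuous_exp.tendsto _).comp h3
    simp only [Set.mem_empty_iff_false, iff_false]
    rcases lt_or_gt_of_ne hxb with hlt | hgt
    · filter_upwards [hr.eventually_lt he hlt] with n hn
      intro hmem
      rw [Set.mem_symmDiff] at hmem
      have hxA : x ∈ starRegion ξ c := hlt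
      have hxAn : x ∈ starRegion (ξn n) (cn n) := hn
      tauto
    · filter_upwards [he.eventually_lt hr hgt] with n hn
      intro hmem
      rw [Set.mem_symmDiff] at hmem
      have hxA : x ∉ starRegion ξ c := not_lt.2 hgt.le
      have hxAn : x ∉ starRegion (ξn n) (cn n) := not_lt.2 hn.le
      tauto
  have := tendsto_measure_of_ae_tendsto_indicator (μ := volume) atTop
    MeasurableSet.empty
    (fun n => (hAn n).measurableSet.symmDiff hAopen.measurableSet)
    hBm hBfin hsubB hae
  simpa using this
end

section
/- Let (D, 𝒜, μ) be a finite measure space, a⁻ < a⁺ real constants, ξ : D → ℝ measurable, and p ≥ 1 a real number. For any measurable ξ' : D → ℝ and ε > 0 with |ξ'(x) − ξ(x)| ≤ ε for all x ∈ D, the level-set fields F_ls[ξ] := a⁻·1_{{ξ < 0}} + a⁺·1_{{ξ ≥ 0}} and F_ls[ξ'] := a⁻·1_{{ξ' < 0}} + a⁺·1_{{ξ' ≥ 0}} satisfy ∫_D |F_ls[ξ'](x) − F_ls[ξ](x)|^p dμ(x) ≤ (a⁺ − a⁻)^p · μ({x ∈ D : |ξ(x)| ≤ ε}). (Pointwise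 Lᵖ perturbation bound for the level-set map: the fields can only differ where |ξ| ≤ ε.) -/
open MeasureTheory

/-- The level-set field `F_ls[ξ] = a⁻·1_{ξ<0} + a⁺·1_{ξ≥0}`. -/
noncomputable def levelSetField {D : Type*} (aminus aplus : ℝ) (ξ : D → ℝ) (x : D) : ℝ :=
  if ξ x < 0 then aminus else aplus

/-- Pointwise `Lᵖ` perturbation bound for the level-set map: if `|ξ' - ξ| ≤ ε`
pointwise, then the `Lᵖ` distance of the level-set fields is controlled by the
measure of the set where `|ξ| ≤ ε`. -/
theorem levelSetField_Lp_perturbation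
    {D : Type*} [MeasurableSpace D] (μ : Measure D) [IsFiniteMeasure μ]
    (aminus aplus : ℝ) (hab : aminus < aplus)
    (ξ ξ' : D → ℝ) (hξ : Measurable ξ) (hξ' : Measurable ξ')
    (p : ℝ) (hp : 1 ≤ p)
    (ε : ℝ) (hε : 0 < ε) (hclose : ∀ x, |ξ' x - ξ x| ≤ ε) :
    ∫ x, |levelSetField aminus aplus ξ' x - levelSetField aminus aplus ξ x| ^ p ∂μ ≤
      (aplus - aminus) ^ p * (μ {x | |ξ x| ≤ ε}).toReal := by
  have hp0 : p ≠ 0 := by linarith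
  set S : Set D := {x | |ξ x| ≤ ε} with hS
  have hSmeas : MeasurableSet S := measurableSet_le hξ.abs measurable_const
  set g : D → ℝ := S.indicator (fun _ => (aplus - aminus) ^ p) with hg
  have hc0 : (0:ℝ) ≤ (aplus - aminus) ^ p :=
    Real.rpow_nonneg (by linarith) p
  have hbound : ∀ x, |levelSetField aminus aplus ξ' x - levelSetField aminus aplus ξ x| ^ p ≤ g x := by
    intro x
    by_cases h : levelSetField aminus aplus ξ' x = levelSetField aminus aplus ξ x
    · rw [h, sub_self, abs_zero, Real.zero_rpow hp0]
      exact Set.indicator_nonneg (fun _ _ => hc0) x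
    · have hxS : x ∈ S := by
        simp only [levelSetField] at h
        have hc := abs_le.mp (hclose x)
        show |ξ x| ≤ ε
        rw [abs_le]
        by_cases h1 : ξ' x < 0 <;> by_cases h2 : ξ x < 0 <;> simp [h1, h2] at h
        · push_neg at h2; constructor <;> linarith
        · push_neg at h1; constructor <;> linarith
      have hd : |levelSetField aminus aplus ξ' x - levelSetField aminus aplus ξ x| = aplus - aminus := by
        simp only [levelSetField] at h ⊢
        by_cases h1 : ξ' x < 0 <;> by_cases h2 : ξ x < 0 <;> simp [h1, h2] at h ⊢
        · rw [abs_of_nonpos (by linarith), neg_sub]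
        · linarith
      rw [hd, hg, Set.indicator_of_mem hxS]
  have hgint : Integrable g μ :=
    (integrable_const _).indicator hSmeas
  have h1 : ∫ x, |levelSetField aminus aplus ξ' x - levelSetField aminus aplus ξ x| ^ p ∂μ ≤ ∫ x, g x ∂μ := by
    apply integral_mono_of_nonneg
    · filter_upwards with x
      exact Real.rpow_nonneg (abs_nonneg _) p
    · exact hgint
    · filter_upwards with x using hbound x
  refine h1.trans ?_
  rw [hg, integral_indicator_const _ hSmeas, smul_eq_mul, mul_comm]
  exact le_rfl
end

section
/- Let (D, 𝒜, μ) be a finite measure space, a⁻ < a⁺ real constants, p ≥ 1 a real number, and ξ : D → ℝ a measurable function whose zero level set is null, i.e. μ({x ∈ D : ξ(x) = 0}) = 0. Suppose (ξ^ε)_{ε>0} is a family of measurable functions with ξ(x) − ε ≤ ξ^ε(x) ≤ ξ(x) + ε for all x ∈ D. Then ∫_D |F_ls[ξ^ε](x) − F_ls[ξ](x)|^p dμ(x) → 0 as ε → 0⁺, where F_ls[η] := a⁻·1_{{η < 0}} + a⁺·1_{{η ≥ 0}}. (Lᵖ continuity of the level-set map under uniform perturbations when the discontinuity set is null.) -/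
open MeasureTheory Filter
open scoped Topology

/-- `Lᵖ` continuity of the level-set map under uniform perturbations when the
zero level set of `ξ` is null: if `ξ - ε ≤ ξ^ε ≤ ξ + ε` pointwise, then
`∫ |F_ls[ξ^ε] - F_ls[ξ]|^p dμ → 0` as `ε → 0⁺`. -/
theorem levelSetField_Lp_continuous
    {D : Type*} [MeasurableSpace D] (μ : Measure D) [IsFiniteMeasure μ]
    (aminus aplus : ℝ) (hab : aminus < aplus)
    (p : ℝ) (hp : 1 ≤ p)
    (ξ : D → ℝ) (hξ : Measurable ξ) (hnull : μ {x | ξ x = 0} = 0)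
    (ξε : ℝ → D → ℝ) (hmeas : ∀ ε > (0 : ℝ), Measurable (ξε ε))
    (hclose : ∀ ε > (0 : ℝ), ∀ x, ξ x - ε ≤ ξε ε x ∧ ξε ε x ≤ ξ x + ε) :
    Tendsto
      (fun ε => ∫ x, |levelSetField aminus aplus (ξε ε) x -
        levelSetField aminus aplus ξ x| ^ p ∂μ)
      (𝓝[>] 0) (𝓝 0) := by
  set C : ℝ := (aplus - aminus) ^ p with hC
  have hp0 : (0:ℝ) < p := lt_of_lt_of_le one_pos hp
  have hCnn : 0 ≤ C := Real.rpow_nonneg (by linarith) p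
  -- measurability of sets
  have hs : ∀ ε : ℝ, MeasurableSet {x | |ξ x| ≤ ε} :=
    fun ε => measurableSet_le hξ.abs measurable_const
  -- measure of {|ξ| ≤ ε} tends to 0
  have hmt : Tendsto (fun ε => μ {x | |ξ x| ≤ ε}) (𝓝[>] (0:ℝ)) (𝓝 0) := by
    rw [ENNReal.tendsto_nhds_zero]
    intro δ hδ
    set s : ℕ → Set D := fun n => {x | |ξ x| ≤ 1 / (n + 1)} with hsdef
    have hanti : Antitone s := by
      intro m n hmn x hx
      simp only [hsdef, Set.mem_setOf_eq] at hx ⊢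
      refine le_trans hx ?_
      have hc : ((m:ℝ) + 1) ≤ (n:ℝ) + 1 := by
        have : (m:ℝ) ≤ n := Nat.cast_le.mpr hmn
        linarith
      exact one_div_le_one_div_of_le (by positivity) hc
    have hiInter : (⋂ n, s n) = {x | ξ x = 0} := by
      ext x
      simp only [Set.mem_iInter, Set.mem_setOf_eq, hsdef]
      constructor
      · intro h
        by_contra hne
        have habs : 0 < |ξ x| := abs_pos.mpr hne
        obtain ⟨n, hn⟩ := exists_nat_one_div_lt habs
        exact absurd (h n) (not_le.mpr hn)
      · intro h n; simp [h]; positivity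
    have htend : Tendsto (fun n => μ (s n)) atTop (𝓝 (μ (⋂ n, s n))) := by
      apply tendsto_measure_iInter_atTop (fun n => (hs _).nullMeasurableSet) hanti
      exact ⟨0, measure_ne_top μ _⟩
    rw [hiInter, hnull] at htend
    have := (ENNReal.tendsto_nhds_zero.mp htend) δ hδ
    obtain ⟨n, hn⟩ := this.exists
    have hpos : (0:ℝ) < 1 / (n + 1) := by positivity
    filter_upwards [Ioo_mem_nhdsGT_of_mem (Set.mem_Ico.mpr ⟨le_refl (0:ℝ), hpos⟩)] with ε hε
    calc μ {x | |ξ x| ≤ ε} ≤ μ (s n) := measure_mono (fun x hx => le_trans hx hε.2.le)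
      _ ≤ δ := hn
  have hmtr : Tendsto (fun ε => C * (μ {x | |ξ x| ≤ ε}).toReal) (𝓝[>] (0:ℝ)) (𝓝 0) := by
    have := (ENNReal.tendsto_toReal ENNReal.zero_ne_top).comp hmt
    simpa using this.const_mul C
  apply squeeze_zero'
  · filter_upwards [self_mem_nhdsWithin] with ε hε
    exact integral_nonneg fun x => Real.rpow_nonneg (abs_nonneg _) p
  · filter_upwards [self_mem_nhdsWithin] with ε hε
    have hε' : (0:ℝ) < ε := hε
    have hbound : ∀ x, |levelSetField aminus aplus (ξε ε) x -
        levelSetField aminus aplus ξ x| ^ p ≤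
        Set.indicator {x | |ξ x| ≤ ε} (fun _ => C) x := by
      intro x
      by_cases hx : |ξ x| ≤ ε
      · rw [Set.indicator_of_mem (show x ∈ {x | |ξ x| ≤ ε} from hx)]
        have h1 : |levelSetField aminus aplus (ξε ε) x -
            levelSetField aminus aplus ξ x| ≤ aplus - aminus := by
          unfold levelSetField
          split_ifs <;> simp [abs_le] <;> first | linarith | (constructor <;> linarith)
        exact Real.rpow_le_rpow (abs_nonneg _) h1 hp0.le
      · rw [Set.indicator_of_notMem (show x ∉ {x | |ξ x| ≤ ε} from hx)]
        push_neg at hx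
        have heq : levelSetField aminus aplus (ξε ε) x = levelSetField aminus aplus ξ x := by
          unfold levelSetField
          obtain ⟨hl, hr⟩ := hclose ε hε' x
          by_cases hneg : ξ x < 0
          · have habs : |ξ x| = -ξ x := abs_of_neg hneg
            have : ξ x < -ε := by rw [habs] at hx; linarith
            simp [hneg, show ξε ε x < 0 by linarith]
          · push_neg at hneg
            have : ε < ξ x := by rw [abs_of_nonneg hneg] at hx; exact hx
            simp [hneg.not_gt, show ¬ ξε ε x < 0 by push_neg; linarith]
        rw [heq, sub_self, abs_zero, Real.zero_rpow hp0.ne']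
    calc ∫ x, |levelSetField aminus aplus (ξε ε) x - levelSetField aminus aplus ξ x| ^ p ∂μ
        ≤ ∫ x, Set.indicator {x | |ξ x| ≤ ε} (fun _ => C) x ∂μ := by
          apply integral_mono_of_nonneg
          · exact Filter.Eventually.of_forall fun x => Real.rpow_nonneg (abs_nonneg _) p
          · exact (integrable_const C).indicator (hs ε)
          · exact Filter.Eventually.of_forall hbound
      _ = C * (μ {x | |ξ x| ≤ ε}).toReal := by
          rw [integral_indicator_const _ (hs ε), smul_eq_mul]; exact mul_comm _ _
  · exact hmtr
end

section
/- Let (Ω, ℱ, ℙ) be a probability space, H a separable real Hilbert space, ξ : Ω → H strongly measurable with E‖ξ‖² < ∞, m := E ξ its Bochner mean, and Q : H → H a continuous linear operator satisfying ⟨Qζ, η⟩ = E[⟨ξ − m, ζ⟩·⟨ξ − m, η⟩] for all ζ, η ∈ H. Then for every Hilbert (orthonormal) basis (e_i)_{i ∈ ι} of H, the series of diagonal entries converges with ∑_{i ∈ ι} ⟨Q e_i, e_i⟩ = E‖ξ − m‖². In particular Q is trace-class with trace E‖ξ − m‖². (Trace-class property of the covariance operator, part of Theorem 2.1.) -/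
open MeasureTheory
open scoped RealInnerProductSpace

/-- Trace-class property of the covariance operator (part of Theorem 2.1): for
every Hilbert basis `(e_i)` of `H`, the diagonal entries of the covariance
operator `Q` sum to `E‖ξ - m‖²`. -/
theorem covariance_operator_trace
    {Ω : Type*} [MeasureSpace Ω] [IsProbabilityMeasure (volume : Measure Ω)]
    {H : Type*} [NormedAddCommGroup H] [InnerProductSpace ℝ H] [CompleteSpace H]
    [TopologicalSpace.SeparableSpace H]
    (ξ : Ω → H) (hmeas : StronglyMeasurable ξ)
    (hint : Integrable (fun ω => ‖ξ ω‖ ^ 2))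
    (m : H) (hm : m = ∫ ω, ξ ω)
    (Q : H →L[ℝ] H)
    (hQ : ∀ ζ η : H, ⟪Q ζ, η⟫ = ∫ ω, ⟪ξ ω - m, ζ⟫ * ⟪ξ ω - m, η⟫)
    (ι : Type*) (b : HilbertBasis ι ℝ H) :
    HasSum (fun i => ⟪Q (b i), b i⟫) (∫ ω, ‖ξ ω - m‖ ^ 2) := by
  -- ι is countable since H is separable
  have hcount : Countable ι := by
    refine Pairwise.countable_of_isOpen_disjoint
      (s := fun i => Metric.ball (b i) (1/2)) ?_ (fun i => Metric.isOpen_ball)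
      (fun i => Metric.nonempty_ball.2 (by norm_num))
    intro i j hij
    refine Metric.ball_disjoint_ball ?_
    have h2 : ‖b i - b j‖ ^ 2 = 2 := by
      rw [norm_sub_sq_real, b.orthonormal.1 i, b.orthonormal.1 j,
        b.orthonormal.2 hij]
      norm_num
    have : (1 : ℝ) ≤ ‖b i - b j‖ := by
      nlinarith [norm_nonneg (b i - b j)]
    rw [dist_eq_norm]
    linarith
  -- pointwise Parseval identity
  have parseval : ∀ x : H, HasSum (fun i => ⟪x, b i⟫ ^ 2) (‖x‖ ^ 2) := by
    intro x
    have := b.hasSum_inner_mul_inner x x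
    rw [real_inner_self_eq_norm_sq] at this
    have e : (fun i => ⟪x, b i⟫ ^ 2) = (fun i => ⟪x, b i⟫ * ⟪b i, x⟫) := by
      funext i
      rw [sq, real_inner_comm x (b i)]
    rw [e]
    exact this
  -- measurability
  have hmeas' : ∀ i : ι, AEStronglyMeasurable (fun ω => ⟪ξ ω - m, b i⟫ ^ 2) volume := by
    intro i
    exact (((hmeas.sub stronglyMeasurable_const).inner stronglyMeasurable_const).pow 2
      ).aestronglyMeasurable
  -- the bound `‖ξ ω - m‖²` is integrable
  have hbint : Integrable (fun ω => ‖ξ ω - m‖ ^ 2) := by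
    have : ∀ ω, ‖‖ξ ω - m‖ ^ 2‖ ≤ 2 * ‖ξ ω‖ ^ 2 + 2 * ‖m‖ ^ 2 := by
      intro ω
      have h1 : ‖ξ ω - m‖ ≤ ‖ξ ω‖ + ‖m‖ := norm_sub_le _ _
      rw [Real.norm_of_nonneg (by positivity)]
      nlinarith [sq_nonneg (‖ξ ω‖ - ‖m‖), norm_nonneg (ξ ω - m), norm_nonneg (ξ ω), norm_nonneg m,
        mul_self_le_mul_self (norm_nonneg (ξ ω - m)) h1]
    have hg : Integrable (fun ω => 2 * ‖ξ ω‖ ^ 2 + 2 * ‖m‖ ^ 2) volume :=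
      (hint.const_mul 2).add (integrable_const _)
    refine hg.mono'
      (((hmeas.sub stronglyMeasurable_const).norm.pow 2).aestronglyMeasurable) ?_
    filter_upwards with ω using this ω
  have key : HasSum (fun i => ∫ ω, ⟪ξ ω - m, b i⟫ ^ 2) (∫ ω, ‖ξ ω - m‖ ^ 2) := by
    refine hasSum_integral_of_dominated_convergence
      (bound := fun i ω => ⟪ξ ω - m, b i⟫ ^ 2) hmeas' ?_ ?_ ?_ ?_
    · intro i
      filter_upwards with ω
      rw [Real.norm_of_nonneg (sq_nonneg _)]
    · filter_upwards with ω
      exact (parseval (ξ ω - m)).summable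
    · refine hbint.congr ?_
      filter_upwards with ω
      exact ((parseval (ξ ω - m)).tsum_eq).symm
    · filter_upwards with ω
      exact parseval (ξ ω - m)
  convert key using 2 with i
  rw [hQ]
  congr 1
  ext ω
  rw [sq]
end

section
/- Let (Ω, ℱ, ℙ) be a probability space, H a separable real Hilbert space, m ∈ H, (e_i)_{i ∈ ℕ} an orthonormal family in H, and (λ_i)_{i ∈ ℕ} nonnegative reals with ∑_i λ_i < ∞. Let (β_i)_{i ∈ ℕ} be an independent family of real random variables, each with the standard Gaussian distribution N(0,1). Then for ℙ-almost every ω ∈ Ω, the Karhunen–Loève series m + ∑_{i ∈ ℕ} √(λ_i)·β_i(ω)·e_i converges in H (the partial sums form a convergent sequence in H). (Almost sure convergence of the Karhunen–Loève expansion, Theorem 2.2.) -/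
open MeasureTheory ProbabilityTheory Filter
open scoped Topology

open Real in
open scoped ENNReal NNReal in
/-- The second moment of the standard Gaussian measure is finite. -/
lemma gaussian_sq_lintegral_lt_top :
    ∫⁻ x, ENNReal.ofReal (x ^ 2) ∂(gaussianReal 0 1) < ∞ := by
  rw [gaussianReal_of_var_ne_zero 0 one_ne_zero]
  rw [lintegral_withDensity_eq_lintegral_mul _ (measurable_gaussianPDF 0 1)
    (by measurability)]
  have hint : Integrable (fun x : ℝ => gaussianPDFReal 0 1 x * x ^ 2) := by
    have h2 : Integrable (fun x : ℝ => x ^ (2 : ℝ) * Real.exp (-(1/2) * x ^ 2)) :=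
      integrable_rpow_mul_exp_neg_mul_sq (by norm_num) (by norm_num)
    have h3 := h2.const_mul ((Real.sqrt (2 * Real.pi))⁻¹)
    refine h3.congr (Filter.Eventually.of_forall fun x => ?_)
    simp only [gaussianPDFReal, NNReal.coe_one, mul_one, sub_zero, Real.rpow_two]
    ring_nf
  have hfin := hint.lintegral_lt_top
  refine lt_of_le_of_lt (le_of_eq ?_) hfin
  refine lintegral_congr fun x => ?_
  simp only [Pi.mul_apply, gaussianPDF]
  rw [← ENNReal.ofReal_mul (gaussianPDFReal_nonneg 0 1 x)]

/-- Almost sure convergence of the Karhunen–Loève expansion (Theorem 2.2):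
if `(e_i)` is orthonormal, `(λ_i)` nonnegative and summable, and `(β_i)` are
independent standard Gaussians, then the partial sums of
`m + ∑ i √(λ_i)·β_i·e_i` converge in `H` almost surely. -/
theorem karhunen_loeve_ae_convergence
    {Ω : Type*} [MeasureSpace Ω] [IsProbabilityMeasure (volume : Measure Ω)]
    {H : Type*} [NormedAddCommGroup H] [InnerProductSpace ℝ H] [CompleteSpace H]
    (m : H) (e : ℕ → H) (he : Orthonormal ℝ e)
    (lam : ℕ → ℝ) (hlam : ∀ i, 0 ≤ lam i) (hsum : Summable lam)
    (β : ℕ → Ω → ℝ) (hβmeas : ∀ i, Measurable (β i))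
    (hβindep : iIndepFun β volume)
    (hβgauss : ∀ i, Measure.map (β i) volume = gaussianReal 0 1) :
    ∀ᵐ ω, ∃ l : H,
      Tendsto (fun n => m + ∑ i ∈ Finset.range n, (Real.sqrt (lam i) * β i ω) • e i)
        atTop (𝓝 l) := by
  set C : ENNReal := ∫⁻ x, ENNReal.ofReal (x ^ 2) ∂(gaussianReal 0 1) with hC
  have hCfin : C < ⊤ := gaussian_sq_lintegral_lt_top
  set F : ℕ → Ω → ENNReal := fun i ω => ENNReal.ofReal (lam i * β i ω ^ 2) with hF
  have hFmeas : ∀ i, Measurable (F i) := fun i =>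
    (measurable_const.mul ((hβmeas i).pow_const 2)).ennreal_ofReal
  have hFint : ∀ i, ∫⁻ ω, F i ω = ENNReal.ofReal (lam i) * C := by
    intro i
    have h1 : ∀ ω, F i ω = ENNReal.ofReal (lam i) * ENNReal.ofReal (β i ω ^ 2) := by
      intro ω; rw [hF]; exact ENNReal.ofReal_mul (hlam i)
    simp_rw [h1]
    rw [lintegral_const_mul _ ((hβmeas i).pow_const 2).ennreal_ofReal]
    congr 1
    rw [hC, ← hβgauss i, lintegral_map (by measurability) (hβmeas i)]
  have htotal : ∫⁻ ω, ∑' i, F i ω ≠ ⊤ := by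
    rw [lintegral_tsum fun i => (hFmeas i).aemeasurable]
    simp_rw [hFint]
    rw [ENNReal.tsum_mul_right, ← ENNReal.ofReal_tsum_of_nonneg hlam hsum]
    exact ENNReal.mul_ne_top ENNReal.ofReal_ne_top hCfin.ne
  have hae : ∀ᵐ ω, ∑' i, F i ω < ⊤ :=
    ae_lt_top (by measurability) htotal
  filter_upwards [hae] with ω hω
  have hsummable : Summable fun i => lam i * β i ω ^ 2 := by
    have := ENNReal.summable_toReal hω.ne
    refine this.congr fun i => ?_
    rw [hF]
    exact ENNReal.toReal_ofReal (mul_nonneg (hlam i) (sq_nonneg _))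
  have hsumH : Summable fun i => (Real.sqrt (lam i) * β i ω) • e i := by
    have key := (he.orthogonalFamily.summable_iff_norm_sq_summable
      fun i => Real.sqrt (lam i) * β i ω).mpr
    have h2 : Summable fun i => ‖Real.sqrt (lam i) * β i ω‖ ^ 2 := by
      refine hsummable.congr fun i => ?_
      rw [Real.norm_eq_abs, sq_abs, mul_pow, Real.sq_sqrt (hlam i)]
    simpa [LinearIsometry.toSpanSingleton_apply] using key h2
  refine ⟨m + ∑' i, (Real.sqrt (lam i) * β i ω) • e i, ?_⟩
  exact tendsto_const_nhds.add hsumH.hasSum.tendsto_sum_nat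
end
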